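/- arXiv:0906.4842 — 7 statements merged into one kernel-verified Lean document; each statement's English description precedes it below -/
import Mathlib

section
/- Suppose G : X × U → X is increasing in the state and decreasing in the control (componentwise order on ℝ^n), the control set U has lower and upper bounds u♭ ≤ u ≤ u♯ for all u ∈ U, and D ⊆ X × U is an upper set in the state variable (i.e., (x,u) ∈ D and x' ≥ x imply (x',u) ∈ D). Then the viability kernels satisfy V(G♯,D) ⊆ V(G,D) ⊆ V(G♭,D), where G♭(x) = G(x,u♭) and G♯(x) = G(x,u♯) are viewed as controlled systems with the same control set U (the dynamics ignores the control). -/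
/-- Viability kernel of the controlled dynamics `G` with admissible control set `Uset`
and acceptable set `D`. -/
def Viab {X C : Type*} (G : X → C → X) (Uset : Set C) (D : Set (X × C)) : Set X :=
  {x0 | ∃ (x : ℕ → X) (u : ℕ → C), x 0 = x0 ∧ (∀ t, u t ∈ Uset) ∧
    (∀ t, x (t + 1) = G (x t) (u t)) ∧ (∀ t, (x t, u t) ∈ D)}

/-- for `G` increasing in the state, decreasing in the control,
a bounded control set, and `D` an upper set in the state variable,
`V(G♯,D) ⊆ V(G,D) ⊆ V(G♭,D)`. -/
theorem stmt1 {n m : ℕ} (G : (Fin n → ℝ) → (Fin m → ℝ) → (Fin n → ℝ))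
    (U : Set (Fin m → ℝ)) (D : Set ((Fin n → ℝ) × (Fin m → ℝ)))
    (ub us : Fin m → ℝ) (hub : ub ∈ U) (hus : us ∈ U)
    (hbounds : ∀ u ∈ U, ub ≤ u ∧ u ≤ us)
    (hGstate : ∀ u : Fin m → ℝ, Monotone (fun x => G x u))
    (hGcontrol : ∀ x : Fin n → ℝ, Antitone (fun u => G x u))
    (hDupper : ∀ (x x' : Fin n → ℝ) (u : Fin m → ℝ), (x, u) ∈ D → x ≤ x' → (x', u) ∈ D) :
    Viab (fun x _ => G x us) U D ⊆ Viab G U D ∧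
      Viab G U D ⊆ Viab (fun x _ => G x ub) U D := by
  constructor
  · rintro x0 ⟨x, u, hx0, hU, hdyn, hD⟩
    set y : ℕ → (Fin n → ℝ) := fun t => Nat.rec x0 (fun t yt => G yt (u t)) t with hy
    have hle : ∀ t, x t ≤ y t := by
      intro t
      induction t with
      | zero => simp [hy, hx0]
      | succ t ih =>
        have h1 : G (x t) us ≤ G (x t) (u t) := hGcontrol (x t) (hbounds _ (hU t)).2
        have h2 : G (x t) (u t) ≤ G (y t) (u t) := hGstate (u t) ih
        calc x (t + 1) = G (x t) us := hdyn t
          _ ≤ G (y t) (u t) := le_trans h1 h2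
          _ = y (t + 1) := rfl
    exact ⟨y, u, rfl, hU, fun t => rfl, fun t => hDupper _ _ _ (hD t) (hle t)⟩
  · rintro x0 ⟨x, u, hx0, hU, hdyn, hD⟩
    set y : ℕ → (Fin n → ℝ) := fun t => Nat.rec x0 (fun _ yt => G yt ub) t with hy
    have hle : ∀ t, x t ≤ y t := by
      intro t
      induction t with
      | zero => simp [hy, hx0]
      | succ t ih =>
        have h1 : G (x t) (u t) ≤ G (x t) ub := hGcontrol (x t) (hbounds _ (hU t)).1
        have h2 : G (x t) ub ≤ G (y t) ub := hGstate ub ih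
        calc x (t + 1) = G (x t) (u t) := hdyn t
          _ ≤ G (y t) ub := le_trans h1 h2
          _ = y (t + 1) := rfl
    exact ⟨y, u, rfl, hU, fun t => rfl, fun t => hDupper _ _ _ (hD t) (hle t)⟩
end

section
/- Let G : X × U → X be increasing in the state and decreasing in the control, with control bounds u♭, u♯ ∈ U. If D is a production acceptable set (increasing in both state and control), then V(G♯,D♭) ⊆ V(G♭,D♭) ∪ V(G♯,D♯) ⊆ V(G,D) ⊆ V(G♭,D♯), where D♭ = {x : (x,u♭) ∈ D} × {u♭} and D♯ = {x : (x,u♯) ∈ D} × {u♯}. -/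
/-- for a monotone bioeconomic dynamics and a production acceptable set `D`,
`V(G♯,D♭) ⊆ V(G♭,D♭) ∪ V(G♯,D♯) ⊆ V(G,D) ⊆ V(G♭,D♯)`. -/
theorem stmt2 {n m : ℕ} (G : (Fin n → ℝ) → (Fin m → ℝ) → (Fin n → ℝ))
    (U : Set (Fin m → ℝ)) (D : Set ((Fin n → ℝ) × (Fin m → ℝ)))
    (ub us : Fin m → ℝ) (hub : ub ∈ U) (hus : us ∈ U)
    (hbounds : ∀ u ∈ U, ub ≤ u ∧ u ≤ us)
    (hGstate : ∀ u : Fin m → ℝ, Monotone (fun x => G x u))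
    (hGcontrol : ∀ x : Fin n → ℝ, Antitone (fun u => G x u))
    (hDprod : ∀ (x x' : Fin n → ℝ), ∀ u ∈ U, ∀ u' ∈ U,
      x ≤ x' → u ≤ u' → (x, u) ∈ D → (x', u') ∈ D) :
    Viab (fun x _ => G x us) U ({x | (x, ub) ∈ D} ×ˢ ({ub} : Set (Fin m → ℝ)))
        ⊆ Viab (fun x _ => G x ub) U ({x | (x, ub) ∈ D} ×ˢ ({ub} : Set (Fin m → ℝ)))
          ∪ Viab (fun x _ => G x us) U ({x | (x, us) ∈ D} ×ˢ ({us} : Set (Fin m → ℝ))) ∧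
      Viab (fun x _ => G x ub) U ({x | (x, ub) ∈ D} ×ˢ ({ub} : Set (Fin m → ℝ)))
          ∪ Viab (fun x _ => G x us) U ({x | (x, us) ∈ D} ×ˢ ({us} : Set (Fin m → ℝ)))
        ⊆ Viab G U D ∧
      Viab G U D ⊆ Viab (fun x _ => G x ub) U ({x | (x, us) ∈ D} ×ˢ ({us} : Set (Fin m → ℝ))) := by
  refine ⟨?_, ?_, ?_⟩
  · -- V(G♯,D♭) ⊆ V(G♯,D♯)
    rintro x0 ⟨x, u, hx0, hu, hdyn, hD⟩
    right
    refine ⟨x, fun _ => us, hx0, fun _ => hus, fun t => hdyn t, fun t => ?_⟩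
    have h := hD t
    refine ⟨hDprod (x t) (x t) ub hub us hus le_rfl ((hbounds us hus).1) h.1, rfl⟩
  · -- union ⊆ V(G,D)
    rintro x0 (⟨x, u, hx0, hu, hdyn, hD⟩ | ⟨x, u, hx0, hu, hdyn, hD⟩)
    · refine ⟨x, fun _ => ub, hx0, fun _ => hub, fun t => ?_, fun t => (hD t).1⟩
      have h2 := (hD t).2
      simp only [Set.mem_singleton_iff] at h2
      rw [hdyn t]
    · refine ⟨x, fun _ => us, hx0, fun _ => hus, fun t => ?_, fun t => (hD t).1⟩
      rw [hdyn t]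
  · -- V(G,D) ⊆ V(G♭,D♯)
    rintro x0 ⟨x, u, hx0, hu, hdyn, hD⟩
    set y : ℕ → (Fin n → ℝ) := fun t => Nat.rec (x 0) (fun _ yt => G yt ub) t with hy
    have hge : ∀ t, x t ≤ y t := by
      intro t
      induction t with
      | zero => exact le_rfl
      | succ t ih =>
        calc x (t + 1) = G (x t) (u t) := hdyn t
          _ ≤ G (x t) ub := hGcontrol (x t) (hbounds (u t) (hu t)).1
          _ ≤ G (y t) ub := hGstate ub ih
          _ = y (t + 1) := rfl
    refine ⟨y, fun _ => us, hx0, fun _ => hus, fun t => rfl, fun t => ?_⟩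
    exact ⟨hDprod (x t) (y t) (u t) (hu t) us hus (hge t) (hbounds (u t) (hu t)).2 (hD t), rfl⟩
end

section
/- Let G : X × U → X be increasing in the state and decreasing in the control, with control bounds u♭, u♯ ∈ U. If D is a preservation acceptable set (increasing in state, decreasing in control), then V(G♯,D♯) ⊆ V(G,D) = V(G♭,D♭), where D♭ = {x : (x,u♭) ∈ D} × {u♭} and D♯ = {x : (x,u♯) ∈ D} × {u♯}. -/
/-- for a monotone bioeconomic dynamics and a preservation acceptable set `D`,
`V(G♯,D♯) ⊆ V(G,D) = V(G♭,D♭)`. -/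
theorem stmt3 {n m : ℕ} (G : (Fin n → ℝ) → (Fin m → ℝ) → (Fin n → ℝ))
    (U : Set (Fin m → ℝ)) (D : Set ((Fin n → ℝ) × (Fin m → ℝ)))
    (ub us : Fin m → ℝ) (hub : ub ∈ U) (hus : us ∈ U)
    (hbounds : ∀ u ∈ U, ub ≤ u ∧ u ≤ us)
    (hGstate : ∀ u : Fin m → ℝ, Monotone (fun x => G x u))
    (hGcontrol : ∀ x : Fin n → ℝ, Antitone (fun u => G x u))
    (hDpres : ∀ (x x' : Fin n → ℝ), ∀ u ∈ U, ∀ u' ∈ U,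
      x ≤ x' → u' ≤ u → (x, u) ∈ D → (x', u') ∈ D) :
    Viab (fun x _ => G x us) U ({x | (x, us) ∈ D} ×ˢ ({us} : Set (Fin m → ℝ)))
        ⊆ Viab G U D ∧
      Viab G U D = Viab (fun x _ => G x ub) U ({x | (x, ub) ∈ D} ×ˢ ({ub} : Set (Fin m → ℝ))) := by
  constructor
  · rintro x0 ⟨x, u, h0, hU, hdyn, hD⟩
    refine ⟨x, u, h0, hU, ?_, ?_⟩
    · intro t
      have hu : u t = us := (hD t).2
      rw [hdyn t, hu]
    · intro t
      have hu : u t = us := (hD t).2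
      rw [hu]
      exact (hD t).1
  · ext x0
    constructor
    · rintro ⟨x, u, h0, hU, hdyn, hD⟩
      -- build the dominating trajectory using control ub
      set y : ℕ → (Fin n → ℝ) := fun t => Nat.rec x0 (fun _ yt => G yt ub) t with hy
      have hy0 : y 0 = x0 := rfl
      have hystep : ∀ t, y (t + 1) = G (y t) ub := fun t => rfl
      have hle : ∀ t, x t ≤ y t := by
        intro t
        induction t with
        | zero => rw [h0, hy0]
        | succ t ih =>
          rw [hdyn t, hystep t]
          calc G (x t) (u t) ≤ G (x t) ub := hGcontrol (x t) (hbounds (u t) (hU t)).1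
            _ ≤ G (y t) ub := hGstate ub ih
      refine ⟨y, fun _ => ub, hy0, fun _ => hub, fun t => rfl, ?_⟩
      intro t
      refine ⟨?_, rfl⟩
      exact hDpres (x t) (y t) (u t) (hU t) ub hub (hle t) (hbounds (u t) (hU t)).1 (hD t)
    · rintro ⟨x, u, h0, hU, hdyn, hD⟩
      refine ⟨x, u, h0, hU, ?_, ?_⟩
      · intro t
        have hu : u t = ub := (hD t).2
        rw [hdyn t, hu]
      · intro t
        have hu : u t = ub := (hD t).2
        rw [hu]
        exact (hD t).1
end

section
/- Let G be a monotone bioeconomic dynamics (increasing in state, decreasing in control), U bounded by u♭ ≤ u ≤ u♯, and D = {(x,u) : L_i(x,u) ≥ l_i, i = 1,…,p} a production acceptable set where each L_i(·,u♯) is upper semicontinuous in the state. Suppose G♭(x) = G(x,u♭) has a fixed point x̄ and there is L < 1 with ‖G♭(x) − x̄‖ ≤ L‖x − x̄‖ for all x ∈ V₀ = Proj_X(D). If there exists i with L_i(x̄, u♯) < l_i, then the viability kernel V(G,D) is empty. -/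
/-- Auxiliary: for nonnegative vectors dominated componentwise, sup norms compare. -/
lemma norm_le_of_nonneg_of_le {n : ℕ} {a b : Fin n → ℝ} (h0 : 0 ≤ a) (hab : a ≤ b) :
    ‖a‖ ≤ ‖b‖ := by
  rw [pi_norm_le_iff_of_nonneg (norm_nonneg b)]
  intro j
  have := h0 j
  have h1 : ‖a j‖ = a j := abs_of_nonneg this
  calc ‖a j‖ = a j := h1
    _ ≤ b j := hab j
    _ ≤ ‖b j‖ := le_abs_self _
    _ ≤ ‖b‖ := norm_le_pi_norm b j

/-- for a monotone bioeconomic dynamics, a production acceptable set defined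
by indicators and thresholds, and a contracting lower dynamics `G♭` with fixed point `x̄`,
if some indicator fails at `(x̄,u♯)` then the viability kernel is empty. -/
theorem stmt8 {n m p : ℕ} (G : (Fin n → ℝ) → (Fin m → ℝ) → (Fin n → ℝ))
    (U : Set (Fin m → ℝ)) (ub us : Fin m → ℝ) (hub : ub ∈ U) (hus : us ∈ U)
    (hbounds : ∀ u ∈ U, ub ≤ u ∧ u ≤ us)
    (hGstate : ∀ u : Fin m → ℝ, Monotone (fun x => G x u))
    (hGcontrol : ∀ x : Fin n → ℝ, Antitone (fun u => G x u))
    (L : Fin p → (Fin n → ℝ) → (Fin m → ℝ) → ℝ) (l : Fin p → ℝ)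
    (hDprod : ∀ (x x' : Fin n → ℝ), ∀ u ∈ U, ∀ u' ∈ U, x ≤ x' → u ≤ u' →
      (∀ i, l i ≤ L i x u) → (∀ i, l i ≤ L i x' u'))
    (husc : ∀ i, UpperSemicontinuous (fun x : Fin n → ℝ => L i x us))
    (xbar : Fin n → ℝ) (hfix : G xbar ub = xbar)
    (K : ℝ) (hK0 : 0 ≤ K) (hK1 : K < 1)
    (hcontr : ∀ x ∈ {y : Fin n → ℝ | ∃ u ∈ U, ∀ i, l i ≤ L i y u},
      ‖G x ub - xbar‖ ≤ K * ‖x - xbar‖)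
    (hfail : ∃ i, L i xbar us < l i) :
    Viab G U {xu : (Fin n → ℝ) × (Fin m → ℝ) | ∀ i, l i ≤ L i xu.1 xu.2} = ∅ := by
  rw [Set.eq_empty_iff_forall_notMem]
  rintro x0 ⟨x, u, hx0, huU, hdyn, hD⟩
  obtain ⟨i, hi⟩ := hfail
  set z : ℕ → (Fin n → ℝ) := fun t => x t ⊔ xbar with hz
  -- z t is in V0
  have hzV0 : ∀ t, ∀ j, l j ≤ L j (z t) (u t) := fun t =>
    hDprod (x t) (z t) (u t) (huU t) (u t) (huU t) le_sup_left le_rfl (hD t)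
  have hzus : ∀ t, ∀ j, l j ≤ L j (z t) us := fun t =>
    hDprod (z t) (z t) (u t) (huU t) us hus le_rfl (hbounds _ (huU t)).2 (hzV0 t)
  -- contraction of z towards xbar
  have hstep : ∀ t, ‖z (t + 1) - xbar‖ ≤ K * ‖z t - xbar‖ := by
    intro t
    have h1 : z (t + 1) ≤ G (z t) ub := by
      apply sup_le
      · calc x (t + 1) = G (x t) (u t) := hdyn t
          _ ≤ G (x t) ub := hGcontrol (x t) (hbounds _ (huU t)).1
          _ ≤ G (z t) ub := hGstate ub le_sup_left
      · calc xbar = G xbar ub := hfix.symm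
          _ ≤ G (z t) ub := hGstate ub le_sup_right
    have h2 : (0 : Fin n → ℝ) ≤ z (t + 1) - xbar := by
      simp only [Pi.le_def, Pi.zero_apply, Pi.sub_apply, sub_nonneg]
      intro j; exact le_sup_right (a := x (t+1)) j
    have h3 : z (t + 1) - xbar ≤ G (z t) ub - xbar := by
      intro j; exact sub_le_sub_right (h1 j) _
    calc ‖z (t + 1) - xbar‖ ≤ ‖G (z t) ub - xbar‖ := norm_le_of_nonneg_of_le h2 h3
      _ ≤ K * ‖z t - xbar‖ := hcontr (z t) ⟨u t, huU t, hzV0 t⟩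
  have hgeom : ∀ t, ‖z t - xbar‖ ≤ K ^ t * ‖z 0 - xbar‖ := by
    intro t
    induction t with
    | zero => simp
    | succ t ih =>
      calc ‖z (t + 1) - xbar‖ ≤ K * ‖z t - xbar‖ := hstep t
        _ ≤ K * (K ^ t * ‖z 0 - xbar‖) := by
            exact mul_le_mul_of_nonneg_left ih hK0
        _ = K ^ (t + 1) * ‖z 0 - xbar‖ := by ring
  -- z tends to xbar
  have htend : Filter.Tendsto z Filter.atTop (nhds xbar) := by
    rw [tendsto_iff_norm_sub_tendsto_zero]
    have h0 : Filter.Tendsto (fun t : ℕ => K ^ t * ‖z 0 - xbar‖) Filter.atTop (nhds 0) := by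
      have := tendsto_pow_atTop_nhds_zero_of_lt_one hK0 hK1
      simpa using this.mul_const ‖z 0 - xbar‖
    refine squeeze_zero (fun t => norm_nonneg _) hgeom h0
  -- upper semicontinuity gives the contradiction
  have hev : ∀ᶠ y in nhds xbar, L i y us < l i := husc i xbar (l i) hi
  have : ∀ᶠ t in Filter.atTop, L i (z t) us < l i := htend.eventually hev
  obtain ⟨t, ht⟩ := this.exists
  exact absurd (hzus t i) (not_le.mpr ht)
end

section
/- Let G be a monotone bioeconomic dynamics, U bounded by u♭ ≤ u ≤ u♯, and D = {(x,u) : L_i(x,u) ≥ l_i, i = 1,…,p} a preservation acceptable set with each L_i(·,u♭) upper semicontinuous in the state. Suppose G♭(x) = G(x,u♭) has a fixed point x̄ and there exists L < 1 with ‖G♭(x) − x̄‖ ≤ L‖x − x̄‖ for all x ∈ V₀ = Proj_X(D). Then the viability kernel V(G,D) is nonempty if and only if L_i(x̄, u♭) ≥ l_i for all i = 1,…,p. -/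
/-- for a monotone bioeconomic dynamics, a preservation acceptable set defined
by indicators and thresholds, and a contracting lower dynamics `G♭` with fixed point `x̄`,
the viability kernel is nonempty iff all indicators hold at `(x̄,u♭)`. -/
theorem stmt9 {n m p : ℕ} (G : (Fin n → ℝ) → (Fin m → ℝ) → (Fin n → ℝ))
    (U : Set (Fin m → ℝ)) (ub us : Fin m → ℝ) (hub : ub ∈ U) (hus : us ∈ U)
    (hbounds : ∀ u ∈ U, ub ≤ u ∧ u ≤ us)
    (hGstate : ∀ u : Fin m → ℝ, Monotone (fun x => G x u))
    (hGcontrol : ∀ x : Fin n → ℝ, Antitone (fun u => G x u))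
    (L : Fin p → (Fin n → ℝ) → (Fin m → ℝ) → ℝ) (l : Fin p → ℝ)
    (hDpres : ∀ (x x' : Fin n → ℝ), ∀ u ∈ U, ∀ u' ∈ U, x ≤ x' → u' ≤ u →
      (∀ i, l i ≤ L i x u) → (∀ i, l i ≤ L i x' u'))
    (husc : ∀ i, UpperSemicontinuous (fun x : Fin n → ℝ => L i x ub))
    (xbar : Fin n → ℝ) (hfix : G xbar ub = xbar)
    (K : ℝ) (hK0 : 0 ≤ K) (hK1 : K < 1)
    (hcontr : ∀ x ∈ {y : Fin n → ℝ | ∃ u ∈ U, ∀ i, l i ≤ L i y u},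
      ‖G x ub - xbar‖ ≤ K * ‖x - xbar‖) :
    (Viab G U {xu : (Fin n → ℝ) × (Fin m → ℝ) | ∀ i, l i ≤ L i xu.1 xu.2}).Nonempty ↔
      ∀ i, l i ≤ L i xbar ub := by
  constructor
  · rintro ⟨x0, x, u, hx0, hu, hstep, hD⟩
    -- lower trajectory driven by ub
    set y : ℕ → (Fin n → ℝ) := fun t => Nat.rec (x 0) (fun _ yt => G yt ub) t with hy
    have hys : ∀ t, y (t + 1) = G (y t) ub := fun t => rfl
    have hge : ∀ t, x t ≤ y t := by
      intro t
      induction t with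
      | zero => exact le_rfl
      | succ t ih =>
        rw [hstep t, hys t]
        calc G (x t) (u t) ≤ G (x t) ub := hGcontrol (x t) (hbounds _ (hu t)).1
          _ ≤ G (y t) ub := hGstate ub ih
    have hyD : ∀ t, ∀ j, l j ≤ L j (y t) ub := fun t =>
      hDpres (x t) (y t) (u t) (hu t) ub hub (hge t) (hbounds _ (hu t)).1 (hD t)
    have hnorm : ∀ t, ‖y t - xbar‖ ≤ K ^ t * ‖y 0 - xbar‖ := by
      intro t
      induction t with
      | zero => simp
      | succ t ih =>
        rw [hys t, pow_succ, mul_comm (K ^ t) K, mul_assoc]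
        calc ‖G (y t) ub - xbar‖ ≤ K * ‖y t - xbar‖ :=
              hcontr (y t) ⟨ub, hub, hyD t⟩
          _ ≤ K * (K ^ t * ‖y 0 - xbar‖) := by
              exact mul_le_mul_of_nonneg_left ih hK0
    have htend : Filter.Tendsto y Filter.atTop (nhds xbar) := by
      rw [tendsto_iff_norm_sub_tendsto_zero]
      have h0 : Filter.Tendsto (fun t : ℕ => K ^ t * ‖y 0 - xbar‖)
          Filter.atTop (nhds 0) := by
        simpa using
          (tendsto_pow_atTop_nhds_zero_of_norm_lt_one
            (by rwa [Real.norm_eq_abs, abs_of_nonneg hK0])).mul_const ‖y 0 - xbar‖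
      exact squeeze_zero (fun t => norm_nonneg _) hnorm h0
    intro i
    by_contra h
    push_neg at h
    have hev : ∀ᶠ z in nhds xbar, L i z ub < l i := husc i xbar (l i) h
    obtain ⟨t, ht⟩ := (htend.eventually hev).exists
    exact absurd (hyD t i) (not_le.mpr ht)
  · intro h
    refine ⟨xbar, fun _ => xbar, fun _ => ub, rfl, fun _ => hub, fun t => hfix.symm,
      fun t => h⟩
end

section
/- For the age-class dynamics with Beverton-Holt recruitment φ(B) = B/(α + βB) with α ≥ 0, β > 0, and any λ ≥ 0, the vector N̄(λ) with components N̄_a(λ) = Z(λ) s_a(λ) — where s₁(λ)=1, s_a(λ) = exp(−Σ_{k=1}^{a−1}(M_k + λF_k)) for 2 ≤ a ≤ A−1, s_A(λ) = exp(−Σ_{k=1}^{A−1}(M_k + λF_k))/(1 − π e^{−(M_A+λF_A)}), spr(λ) = Σ_a γ_a w_a s_a(λ), and Z(λ) = max{0, (spr(λ) − α)/(β·spr(λ))} — is a fixed point of N ↦ G(N,λ). -/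
open Finset

/-- Spawning stock biomass. -/
def SSB (A : ℕ) (γ w : ℕ → ℝ) (N : Fin A → ℝ) : ℝ :=
  ∑ b : Fin A, γ b.val * w b.val * N b

/-- Age-structured harvested population dynamics (ages are 0-indexed: index `a`
corresponds to age class `a+1` of the paper). -/
noncomputable def Gdyn (A : ℕ) (M F γ w : ℕ → ℝ) (pi : ℝ) (φ : ℝ → ℝ)
    (N : Fin A → ℝ) (lam : ℝ) (a : Fin A) : ℝ :=
  if h0 : a.val = 0 then φ (SSB A γ w N)
  else if h1 : a.val < A - 1 then
    Real.exp (-(M (a.val - 1) + lam * F (a.val - 1))) *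
      N ⟨a.val - 1, by have := a.isLt; omega⟩
  else
    Real.exp (-(M (A - 2) + lam * F (A - 2))) * N ⟨A - 2, by have := a.isLt; omega⟩
      + pi * Real.exp (-(M (A - 1) + lam * F (A - 1))) * N ⟨A - 1, by have := a.isLt; omega⟩

/-- Baranov yield. -/
noncomputable def Yield (A : ℕ) (M F w : ℕ → ℝ) (N : Fin A → ℝ) (lam : ℝ) : ℝ :=
  ∑ a : Fin A, w a.val * (lam * F a.val / (lam * F a.val + M a.val)) *
    (1 - Real.exp (-(M a.val + lam * F a.val))) * N a

/-- Proportion of equilibrium recruits surviving up to age class `a`. -/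
noncomputable def surv (A : ℕ) (M F : ℕ → ℝ) (pi lam : ℝ) (a : Fin A) : ℝ :=
  if a.val = 0 then 1
  else if a.val < A - 1 then
    Real.exp (-(∑ k ∈ Finset.range a.val, (M k + lam * F k)))
  else
    Real.exp (-(∑ k ∈ Finset.range (A - 1), (M k + lam * F k))) /
      (1 - pi * Real.exp (-(M (A - 1) + lam * F (A - 1))))

/-- Spawning per recruit at equilibrium. -/
noncomputable def spr (A : ℕ) (M F γ w : ℕ → ℝ) (pi lam : ℝ) : ℝ :=
  ∑ a : Fin A, γ a.val * w a.val * surv A M F pi lam a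

/-- Equilibrium recruitment for the Beverton-Holt model. -/
noncomputable def Zval (A : ℕ) (M F γ w : ℕ → ℝ) (pi lam α β : ℝ) : ℝ :=
  max 0 ((spr A M F γ w pi lam - α) / (β * spr A M F γ w pi lam))

/-- Equilibrium abundance vector. -/
noncomputable def Nbar (A : ℕ) (M F γ w : ℕ → ℝ) (pi lam α β : ℝ) (a : Fin A) : ℝ :=
  Zval A M F γ w pi lam α β * surv A M F pi lam a

/-- for Beverton-Holt recruitment `φ(B) = B/(α+βB)` the vector
`N̄(λ) = Z(λ)·s(λ)` is a fixed point of `N ↦ G(N,λ)`. -/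
theorem stmt13 (A : ℕ) (hA : 2 ≤ A) (M F γ w : ℕ → ℝ) (pi : ℝ) (α β lam : ℝ)
    (hM : ∀ k, 0 ≤ M k) (hF : ∀ k, 0 ≤ F k) (hγ : ∀ k, 0 ≤ γ k) (hw : ∀ k, 0 ≤ w k)
    (hpi : pi = 0 ∨ pi = 1)
    (hpie : pi * Real.exp (-(M (A - 1) + lam * F (A - 1))) < 1)
    (hspr : 0 < spr A M F γ w pi lam)
    (hα : 0 ≤ α) (hβ : 0 < β) (hlam : 0 ≤ lam) :
    Gdyn A M F γ w pi (fun B => B / (α + β * B)) (Nbar A M F γ w pi lam α β) lam =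
      Nbar A M F γ w pi lam α β := by
  set S := spr A M F γ w pi lam with hS
  set Z := Zval A M F γ w pi lam α β with hZ
  have hq : (1 - pi * Real.exp (-(M (A - 1) + lam * F (A - 1)))) ≠ 0 := by
    have := hpie; intro h; linarith
  -- surv at small indices
  have hsurv_lt : ∀ (j : ℕ) (hj : j < A - 1),
      surv A M F pi lam ⟨j, by omega⟩ =
        Real.exp (-(∑ k ∈ Finset.range j, (M k + lam * F k))) := by
    intro j hj
    unfold surv
    rcases Nat.eq_zero_or_pos j with h | h
    · simp [h]
    · simp [Nat.pos_iff_ne_zero.mp h, hj]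
  have hsurv_top : ∀ (j : ℕ) (hj1 : j = A - 1),
      surv A M F pi lam ⟨j, by omega⟩ =
        Real.exp (-(∑ k ∈ Finset.range (A - 1), (M k + lam * F k))) /
          (1 - pi * Real.exp (-(M (A - 1) + lam * F (A - 1)))) := by
    intro j hj1
    unfold surv
    have hj0 : j ≠ 0 := by omega
    have hjlt : ¬ j < A - 1 := by omega
    simp [hj0, hjlt]
  funext a
  unfold Gdyn
  by_cases h0 : a.val = 0
  · rw [dif_pos h0]
    have hNa : Nbar A M F γ w pi lam α β a = Z := by
      have : surv A M F pi lam a = 1 := by unfold surv; simp [h0]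
      simp [Nbar, this, hZ]
    have hSSB : SSB A γ w (Nbar A M F γ w pi lam α β) = Z * S := by
      unfold SSB Nbar
      rw [hS, spr, Finset.mul_sum]
      apply Finset.sum_congr rfl
      intro b _
      ring
    rw [hSSB, hNa]
    show Z * S / (α + β * (Z * S)) = Z
    rcases le_or_gt ((S - α) / (β * S)) 0 with hle | hlt
    · have hZ0 : Z = 0 := by rw [hZ, Zval, ← hS]; exact max_eq_left hle
      simp [hZ0]
    · have hZv : Z = (S - α) / (β * S) := by
        rw [hZ, Zval, ← hS]; exact max_eq_right hlt.le
      have hβS : 0 < β * S := mul_pos hβ hspr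
      have hSα : 0 < S - α := by
        by_contra h
        push_neg at h
        have : (S - α) / (β * S) ≤ 0 := div_nonpos_of_nonpos_of_nonneg h hβS.le
        linarith
      rw [hZv]
      have hden : α + β * ((S - α) / (β * S) * S) = S := by
        field_simp
        ring
      rw [hden, mul_div_assoc, div_self (ne_of_gt hspr), mul_one]
  · rw [dif_neg h0]
    by_cases h1 : a.val < A - 1
    · rw [dif_pos h1]
      have hprev : a.val - 1 < A - 1 := by omega
      have haa : a = ⟨a.val, a.isLt⟩ := rfl
      have hsa : surv A M F pi lam a =
          Real.exp (-(∑ k ∈ Finset.range a.val, (M k + lam * F k))) := by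
        rw [haa]; exact hsurv_lt a.val h1
      have hsp : surv A M F pi lam ⟨a.val - 1, by have := a.isLt; omega⟩ =
          Real.exp (-(∑ k ∈ Finset.range (a.val - 1), (M k + lam * F k))) :=
        hsurv_lt (a.val - 1) hprev
      unfold Nbar
      rw [hsa, hsp, ← hZ]
      have hsum : (∑ k ∈ Finset.range a.val, (M k + lam * F k)) =
          (∑ k ∈ Finset.range (a.val - 1), (M k + lam * F k)) +
            (M (a.val - 1) + lam * F (a.val - 1)) := by
        conv_lhs => rw [show a.val = (a.val - 1) + 1 by omega]
        rw [Finset.sum_range_succ]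
      have key : Real.exp (-(M (a.val - 1) + lam * F (a.val - 1))) *
          Real.exp (-(∑ k ∈ Finset.range (a.val - 1), (M k + lam * F k))) =
          Real.exp (-(∑ k ∈ Finset.range a.val, (M k + lam * F k))) := by
        rw [← Real.exp_add]
        congr 1
        rw [hsum]
        ring
      rw [← key]
      ring
    · rw [dif_neg h1]
      have haA : a.val = A - 1 := by have := a.isLt; omega
      have hsA2 : surv A M F pi lam ⟨A - 2, by have := a.isLt; omega⟩ =
          Real.exp (-(∑ k ∈ Finset.range (A - 2), (M k + lam * F k))) :=
        hsurv_lt (A - 2) (by omega)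
      have hsA1 : surv A M F pi lam ⟨A - 1, by have := a.isLt; omega⟩ =
          Real.exp (-(∑ k ∈ Finset.range (A - 1), (M k + lam * F k))) /
            (1 - pi * Real.exp (-(M (A - 1) + lam * F (A - 1)))) :=
        hsurv_top (A - 1) rfl
      have hsa : surv A M F pi lam a =
          Real.exp (-(∑ k ∈ Finset.range (A - 1), (M k + lam * F k))) /
            (1 - pi * Real.exp (-(M (A - 1) + lam * F (A - 1)))) := by
        have : a = ⟨A - 1, by omega⟩ := Fin.ext haA
        rw [this]; exact hsurv_top (A - 1) rfl
      unfold Nbar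
      rw [hsA2, hsA1, hsa, ← hZ]
      have hE : Real.exp (-(M (A - 2) + lam * F (A - 2))) *
          Real.exp (-(∑ k ∈ Finset.range (A - 2), (M k + lam * F k))) =
          Real.exp (-(∑ k ∈ Finset.range (A - 1), (M k + lam * F k))) := by
        rw [← Real.exp_add]
        congr 1
        conv_rhs => rw [show A - 1 = (A - 2) + 1 by omega]
        rw [Finset.sum_range_succ]
        ring
      set E := Real.exp (-(∑ k ∈ Finset.range (A - 1), (M k + lam * F k)))
      set q := pi * Real.exp (-(M (A - 1) + lam * F (A - 1)))
      have : Real.exp (-(M (A - 2) + lam * F (A - 2))) * (Z *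
          Real.exp (-(∑ k ∈ Finset.range (A - 2), (M k + lam * F k)))) = Z * E := by
        rw [← hE]; ring
      rw [this]
      field_simp
      ring
end

section
/- For the age-class dynamics G with a concave, increasing, differentiable stock-recruitment relationship φ, fixed point N̄ = N̄(λ♭) of G(·,λ♭), and any N ∈ ℝ₊^A with SSB(N) ≥ SSB(N̄): ‖G(N,λ♭) − N̄‖₁ ≤ φ_G(λ♭) ‖N − N̄‖₁, where φ_G(λ♭) = φ'(SSB(N̄)) · max_a γ_a w_a + max_a e^{−(M_a + λ♭ F_a)} and ‖·‖₁ is the ℓ¹ norm on ℝ^A. -/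
open Finset

/-- key contraction estimate for the age-class dynamics around the fixed
point `N̄` of `G(·,λ♭)`, in the `ℓ¹` norm. -/
theorem stmt15 (A : ℕ) (hA : 2 ≤ A) (M F γ w : ℕ → ℝ) (pi : ℝ) (lamb : ℝ)
    (hM : ∀ k, 0 ≤ M k) (hF : ∀ k, 0 ≤ F k) (hγ : ∀ k, 0 ≤ γ k) (hw : ∀ k, 0 ≤ w k)
    (hpi : pi = 0 ∨ pi = 1) (hlamb : 0 ≤ lamb)
    (φ : ℝ → ℝ) (hφconc : ConcaveOn ℝ (Set.Ici (0 : ℝ)) φ)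
    (hφmono : MonotoneOn φ (Set.Ici (0 : ℝ)))
    (hφdiff : ∀ B ∈ Set.Ici (0 : ℝ), DifferentiableAt ℝ φ B)
    (NB : Fin A → ℝ) (hNB : 0 ≤ NB) (hfix : Gdyn A M F γ w pi φ NB lamb = NB)
    (N : Fin A → ℝ) (hN : 0 ≤ N) (hSSB : SSB A γ w NB ≤ SSB A γ w N) :
    ∑ a : Fin A, |Gdyn A M F γ w pi φ N lamb a - NB a| ≤
      (deriv φ (SSB A γ w NB) *
          Finset.univ.sup' ⟨⟨0, by omega⟩, Finset.mem_univ _⟩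
            (fun a : Fin A => γ a.val * w a.val) +
        Finset.univ.sup' ⟨⟨0, by omega⟩, Finset.mem_univ _⟩
          (fun a : Fin A => Real.exp (-(M a.val + lamb * F a.val)))) *
        ∑ a : Fin A, |N a - NB a| := by

  classical
  set Bbar := SSB A γ w NB with hBbar
  set B := SSB A γ w N with hB
  set S := ∑ a : Fin A, |N a - NB a| with hS
  set Cg := Finset.univ.sup' ⟨⟨0, by omega⟩, Finset.mem_univ _⟩
      (fun a : Fin A => γ a.val * w a.val) with hCg
  set K := Finset.univ.sup' ⟨⟨0, by omega⟩, Finset.mem_univ _⟩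
      (fun a : Fin A => Real.exp (-(M a.val + lamb * F a.val))) with hK
  have hz : (0 : ℕ) < A := by omega
  set z0 : Fin A := ⟨0, hz⟩ with hz0
  set zl : Fin A := ⟨A - 1, by omega⟩ with hzl
  have hSnn : 0 ≤ S := Finset.sum_nonneg fun a _ => abs_nonneg _
  have hKle : ∀ a : Fin A, Real.exp (-(M a.val + lamb * F a.val)) ≤ K := by
    intro a; rw [hK]; exact Finset.le_sup' (fun a : Fin A => Real.exp (-(M a.val + lamb * F a.val))) (Finset.mem_univ a)
  have hKnn : 0 ≤ K := le_trans (Real.exp_pos _).le (hKle z0)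
  have hCgle : ∀ a : Fin A, γ a.val * w a.val ≤ Cg := by
    intro a; rw [hCg]; exact Finset.le_sup' (fun a : Fin A => γ a.val * w a.val) (Finset.mem_univ a)
  have hBbar0 : (0 : ℝ) ≤ Bbar := by
    apply Finset.sum_nonneg
    intro a _
    have h1 : (0:ℝ) ≤ NB a := hNB a
    exact mul_nonneg (mul_nonneg (hγ _) (hw _)) h1
  have hB0 : (0 : ℝ) ≤ B := le_trans hBbar0 hSSB
  -- derivative nonnegative
  have hderivnn : 0 ≤ deriv φ Bbar := by
    have h1 : slope φ Bbar (Bbar + 1) ≤ deriv φ Bbar :=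
      hφconc.slope_le_deriv (Set.mem_Ici.2 hBbar0)
        (Set.mem_Ici.2 (by linarith)) (by linarith) (hφdiff _ (Set.mem_Ici.2 hBbar0))
    have h2 : (0 : ℝ) ≤ slope φ Bbar (Bbar + 1) := by
      rw [slope_def_field]
      have := hφmono (Set.mem_Ici.2 hBbar0) (Set.mem_Ici.2 (by linarith : (0:ℝ) ≤ Bbar + 1))
        (by linarith : Bbar ≤ Bbar + 1)
      have hd : Bbar + 1 - Bbar = 1 := by ring
      rw [hd, div_one]
      linarith
    linarith
  -- concavity estimate
  have hconcest : φ B - φ Bbar ≤ deriv φ Bbar * (B - Bbar) := by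
    rcases eq_or_lt_of_le hSSB with heq | hlt
    · rw [← heq]; simp
    · have := hφconc.slope_le_deriv (Set.mem_Ici.2 hBbar0) (Set.mem_Ici.2 hB0)
        hlt (hφdiff _ (Set.mem_Ici.2 hBbar0))
      rw [slope_def_field, div_le_iff₀ (by linarith)] at this
      linarith
  have hφnn : 0 ≤ φ B - φ Bbar :=
    sub_nonneg.2 (hφmono (Set.mem_Ici.2 hBbar0) (Set.mem_Ici.2 hB0) hSSB)
  -- biomass difference bound
  have hBdiff : B - Bbar ≤ Cg * S := by
    have h1 : B - Bbar = ∑ a : Fin A, γ a.val * w a.val * (N a - NB a) := by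
      rw [hB, hBbar, SSB, SSB, ← Finset.sum_sub_distrib]
      exact Finset.sum_congr rfl fun a _ => by ring
    rw [h1, hS, Finset.mul_sum]
    apply Finset.sum_le_sum
    intro a _
    calc γ a.val * w a.val * (N a - NB a) ≤ γ a.val * w a.val * |N a - NB a| := by
          apply mul_le_mul_of_nonneg_left (le_abs_self _)
          exact mul_nonneg (hγ _) (hw _)
      _ ≤ Cg * |N a - NB a| :=
          mul_le_mul_of_nonneg_right (hCgle a) (abs_nonneg _)
  -- fixed point equations
  have hfixa : ∀ a : Fin A, Gdyn A M F γ w pi φ NB lamb a = NB a := fun a => congrFun hfix a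
  set pred : Fin A → Fin A := fun a => ⟨a.val - 1, lt_of_le_of_lt (Nat.sub_le _ _) a.isLt⟩
    with hpred
  -- pointwise bounds
  have hterm0 : |Gdyn A M F γ w pi φ N lamb z0 - NB z0| ≤ deriv φ Bbar * Cg * S := by
    have h0 : Gdyn A M F γ w pi φ N lamb z0 = φ B := by rw [Gdyn]; simp [hz0]; rfl
    have h0' : NB z0 = φ Bbar := by
      rw [← hfixa z0, Gdyn]; simp [hz0]; rfl
    rw [h0, h0', abs_of_nonneg hφnn]
    calc φ B - φ Bbar ≤ deriv φ Bbar * (B - Bbar) := hconcest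
      _ ≤ deriv φ Bbar * (Cg * S) := mul_le_mul_of_nonneg_left hBdiff hderivnn
      _ = deriv φ Bbar * Cg * S := by ring
  have htermrest : ∀ a ∈ Finset.univ.erase z0,
      |Gdyn A M F γ w pi φ N lamb a - NB a| ≤
        K * (|N (pred a) - NB (pred a)| + if a = zl then |N zl - NB zl| else 0) := by
    intro a ha
    have hane : a ≠ z0 := Finset.ne_of_mem_erase ha
    have hav : a.val ≠ 0 := fun h => hane (Fin.ext h)
    rw [← hfixa a]
    by_cases hlt : a.val < A - 1
    · have hne : a ≠ zl := by
        intro h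
        have hv : a.val = A - 1 := congrArg Fin.val h
        omega
      rw [if_neg hne, Gdyn, Gdyn, dif_neg hav, dif_neg hav, dif_pos hlt, dif_pos hlt]
      have hidx : (⟨a.val - 1, by have := a.isLt; omega⟩ : Fin A) = pred a := rfl
      rw [hidx, ← mul_sub, abs_mul, Real.abs_exp, add_zero]
      apply mul_le_mul_of_nonneg_right _ (abs_nonneg _)
      exact hKle (pred a)
    · have haval : a.val = A - 1 := by have := a.isLt; omega
      have heq : a = zl := Fin.ext haval
      rw [if_pos heq, Gdyn, Gdyn, dif_neg hav, dif_neg hav, dif_neg hlt, dif_neg hlt]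
      have hpa : (⟨A - 2, by have := a.isLt; omega⟩ : Fin A) = pred a := by
        apply Fin.ext; simp [hpred, haval]; omega
      have hla : (⟨A - 1, by have := a.isLt; omega⟩ : Fin A) = zl := rfl
      rw [hpa, hla]
      have hstep : Real.exp (-(M (A - 2) + lamb * F (A - 2))) * N (pred a)
          + pi * Real.exp (-(M (A - 1) + lamb * F (A - 1))) * N zl
          - (Real.exp (-(M (A - 2) + lamb * F (A - 2))) * NB (pred a)
          + pi * Real.exp (-(M (A - 1) + lamb * F (A - 1))) * NB zl)
          = Real.exp (-(M (A - 2) + lamb * F (A - 2))) * (N (pred a) - NB (pred a))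
          + pi * Real.exp (-(M (A - 1) + lamb * F (A - 1))) * (N zl - NB zl) := by ring
      rw [hstep]
      calc |Real.exp (-(M (A - 2) + lamb * F (A - 2))) * (N (pred a) - NB (pred a))
          + pi * Real.exp (-(M (A - 1) + lamb * F (A - 1))) * (N zl - NB zl)|
          ≤ |Real.exp (-(M (A - 2) + lamb * F (A - 2))) * (N (pred a) - NB (pred a))|
          + |pi * Real.exp (-(M (A - 1) + lamb * F (A - 1))) * (N zl - NB zl)| := abs_add_le _ _
        _ ≤ K * |N (pred a) - NB (pred a)| + K * |N zl - NB zl| := by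
            apply add_le_add
            · rw [abs_mul, Real.abs_exp]
              apply mul_le_mul_of_nonneg_right _ (abs_nonneg _)
              have hpv : (pred a).val = A - 2 := by simp [hpred, haval]; omega
              have := hKle (pred a)
              rwa [hpv] at this
            · rw [abs_mul, abs_mul]
              apply mul_le_mul_of_nonneg_right _ (abs_nonneg _)
              rcases hpi with h | h
              · rw [h]; simpa using hKnn
              · rw [h, abs_one, one_mul, Real.abs_exp]
                have := hKle zl
                simpa [hzl] using this
        _ = K * (|N (pred a) - NB (pred a)| + |N zl - NB zl|) := by ring
  -- sum over the tail after reindexing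
  have hsum1 : ∑ a ∈ Finset.univ.erase z0, |N (pred a) - NB (pred a)|
      = ∑ b ∈ Finset.univ.erase zl, |N b - NB b| := by
    apply Finset.sum_nbij' (i := pred)
      (j := fun b => ⟨min (b.val + 1) (A - 1), by omega⟩)
    · intro a ha
      have hane : a ≠ z0 := Finset.ne_of_mem_erase ha
      have hav : a.val ≠ 0 := fun h => hane (Fin.ext h)
      apply Finset.mem_erase.2
      refine ⟨?_, Finset.mem_univ _⟩
      intro h
      have : a.val - 1 = A - 1 := congrArg Fin.val h
      have := a.isLt
      omega
    · intro b hb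
      have hbne : b ≠ zl := Finset.ne_of_mem_erase hb
      have hbv : b.val ≠ A - 1 := fun h => hbne (Fin.ext h)
      have := b.isLt
      apply Finset.mem_erase.2
      refine ⟨?_, Finset.mem_univ _⟩
      intro h
      have : min (b.val + 1) (A - 1) = 0 := congrArg Fin.val h
      omega
    · intro a ha
      have hane : a ≠ z0 := Finset.ne_of_mem_erase ha
      have hav : a.val ≠ 0 := fun h => hane (Fin.ext h)
      have := a.isLt
      apply Fin.ext
      simp [hpred]
      omega
    · intro b hb
      have hbne : b ≠ zl := Finset.ne_of_mem_erase hb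
      have hbv : b.val ≠ A - 1 := fun h => hbne (Fin.ext h)
      have := b.isLt
      apply Fin.ext
      simp [hpred]
      omega
    · intro a ha; rfl
  have hsum2 : ∑ a ∈ Finset.univ.erase z0, (if a = zl then |N zl - NB zl| else 0)
      = |N zl - NB zl| := by
    rw [Finset.sum_ite_eq' (Finset.univ.erase z0) zl (fun _ => |N zl - NB zl|)]
    rw [if_pos]
    apply Finset.mem_erase.2
    refine ⟨?_, Finset.mem_univ _⟩
    intro h
    have : A - 1 = 0 := congrArg Fin.val h
    omega
  -- combine
  have hmain : ∑ a : Fin A, |Gdyn A M F γ w pi φ N lamb a - NB a|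
      ≤ deriv φ Bbar * Cg * S + K * S := by
    rw [← Finset.add_sum_erase Finset.univ _ (Finset.mem_univ z0)]
    apply add_le_add hterm0
    calc ∑ a ∈ Finset.univ.erase z0, |Gdyn A M F γ w pi φ N lamb a - NB a|
        ≤ ∑ a ∈ Finset.univ.erase z0,
            K * (|N (pred a) - NB (pred a)| + if a = zl then |N zl - NB zl| else 0) :=
          Finset.sum_le_sum htermrest
      _ = K * (∑ a ∈ Finset.univ.erase z0, |N (pred a) - NB (pred a)|
            + ∑ a ∈ Finset.univ.erase z0, (if a = zl then |N zl - NB zl| else 0)) := by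
          rw [← Finset.sum_add_distrib, Finset.mul_sum]
      _ = K * (∑ b ∈ Finset.univ.erase zl, |N b - NB b| + |N zl - NB zl|) := by
          rw [hsum1]
          rw [hsum2]
      _ = K * S := by
          rw [hS, ← Finset.sum_erase_add Finset.univ _ (Finset.mem_univ zl)]
  calc ∑ a : Fin A, |Gdyn A M F γ w pi φ N lamb a - NB a|
      ≤ deriv φ Bbar * Cg * S + K * S := hmain
    _ = (deriv φ Bbar * Cg + K) * S := by ring
end
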